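/- arXiv:2211.00606 — 2 statements merged into one kernel-verified Lean document; each statement's English description precedes it below -/
import Mathlib

section
/- Let v ∈ ℝⁿ be a unit vector of a symmetric real n×n matrix A with eigenvalue λ, written v = (v', v_n) with v' ∈ ℝ^{n-1}. Write A in block form with upper-left (n-1)×(n-1) block B, last column x ∈ ℝ^{n-1} (above the diagonal), and lower-right entry a. If w ∈ ℝ^{n-1} is a unit eigenvector of B with eigenvalue μ, then |v_n · ⟨w, x⟩| ≤ |μ - λ|. -/
theorem stmt_1 (n : ℕ) (A : Matrix (Fin (n + 1)) (Fin (n + 1)) ℝ)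
    (hA : A.IsSymm)
    (v : EuclideanSpace ℝ (Fin (n + 1))) (hv : ‖v‖ = 1) (lam : ℝ)
    (hev : A.mulVec v = lam • (v : Fin (n + 1) → ℝ))
    (B : Matrix (Fin n) (Fin n) ℝ)
    (hB : B = A.submatrix Fin.castSucc Fin.castSucc)
    (x : Fin n → ℝ) (hx : ∀ i : Fin n, x i = A i.castSucc (Fin.last n))
    (w : EuclideanSpace ℝ (Fin n)) (hw : ‖w‖ = 1) (mu : ℝ)
    (hew : B.mulVec w = mu • (w : Fin n → ℝ)) :
    |v (Fin.last n) * ∑ i : Fin n, w i * x i| ≤ |mu - lam| := by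
  set v' : EuclideanSpace ℝ (Fin n) := WithLp.toLp 2 (fun i : Fin n => v i.castSucc) with hv'
  -- coordinate equation
  have eq1 : ∀ i : Fin n, B.mulVec v' i + x i * v (Fin.last n) = lam * v' i := by
    intro i
    have h := congrFun hev i.castSucc
    simp only [Matrix.mulVec, dotProduct, Pi.smul_apply, smul_eq_mul] at h
    rw [Fin.sum_univ_castSucc] at h
    simp only [Matrix.mulVec, dotProduct, hB, Matrix.submatrix_apply, hx i, hv']
    linarith [h]
  -- symmetry of B
  have hBs : ∀ i j : Fin n, B j i = B i j := by
    intro i j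
    rw [hB]
    simp only [Matrix.submatrix_apply]
    exact hA.apply i.castSucc j.castSucc
  have hswap : ∑ i : Fin n, w i * B.mulVec v' i = ∑ i : Fin n, v' i * B.mulVec w i := by
    simp only [Matrix.mulVec, dotProduct, Finset.mul_sum]
    rw [Finset.sum_comm]
    congr 1; ext j; congr 1; ext i
    rw [hBs i j]; ring
  have key : v (Fin.last n) * ∑ i : Fin n, w i * x i
      = (lam - mu) * ∑ i : Fin n, w i * v' i := by
    have h1 : ∑ i : Fin n, w i * B.mulVec v' i
        = ∑ i : Fin n, w i * (lam * v' i - x i * v (Fin.last n)) := by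
      congr 1; ext i; rw [← eq1 i]; ring
    have h2 : ∑ i : Fin n, v' i * B.mulVec w i = mu * ∑ i : Fin n, w i * v' i := by
      rw [hew, Finset.mul_sum]
      congr 1; ext i; simp [Pi.smul_apply]; ring
    rw [h1, h2] at hswap
    have h3 : ∑ i : Fin n, w i * (lam * v' i - x i * v (Fin.last n))
        = lam * (∑ i : Fin n, w i * v' i) - v (Fin.last n) * ∑ i : Fin n, w i * x i := by
      rw [Finset.mul_sum, Finset.mul_sum, ← Finset.sum_sub_distrib]
      congr 1; ext i; ring
    rw [h3] at hswap
    linarith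
  -- norm bound on v'
  have hv'le : ‖v'‖ ≤ 1 := by
    have h1 : ‖v'‖ ^ 2 ≤ ‖v‖ ^ 2 := by
      rw [EuclideanSpace.norm_eq, EuclideanSpace.norm_eq,
        Real.sq_sqrt (by positivity), Real.sq_sqrt (by positivity)]
      rw [Fin.sum_univ_castSucc (f := fun j => ‖v j‖ ^ 2)]
      have : (0:ℝ) ≤ ‖v (Fin.last n)‖ ^ 2 := by positivity
      simp only [hv']
      linarith
    nlinarith [norm_nonneg v', norm_nonneg v]
  have hinner : |∑ i : Fin n, w i * v' i| ≤ 1 := by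
    have h := abs_real_inner_le_norm w v'
    rw [hw] at h
    have h2 : (inner ℝ w v' : ℝ) = ∑ i : Fin n, w i * v' i := by
      simp [PiLp.inner_apply, RCLike.inner_apply, mul_comm]
    rw [h2] at h
    calc |∑ i : Fin n, w i * v' i| ≤ 1 * ‖v'‖ := h
      _ ≤ 1 := by linarith
  rw [key, abs_mul]
  have : |lam - mu| = |mu - lam| := abs_sub_comm _ _
  rw [this]
  calc |mu - lam| * |∑ i : Fin n, w i * v' i| ≤ |mu - lam| * 1 :=
        mul_le_mul_of_nonneg_left hinner (abs_nonneg _)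
    _ = |mu - lam| := mul_one _
end

section
/- Let ξ be a real random variable, v ∈ ℝⁿ, and let v' ∈ ℝ^m (m ≤ n) be the restriction of v to a subset I of its coordinates. Then for any r > 0, ρ_ξ(v, r) ≤ ρ_ξ(v', r), where ρ_ξ(x, r) = sup_{y∈ℝ} P(|⟨x, Ξ⟩ - y| ≤ r) and Ξ has i.i.d. coordinates distributed as ξ. -/
open MeasureTheory ProbabilityTheory ENNReal

/-- The Lévy concentration function of the vector `x` with respect to the
random vector `Ξ`. -/
noncomputable def levyConc {Ω : Type*} [MeasureSpace Ω] {n : ℕ}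
    (Ξ : Ω → Fin n → ℝ) (x : Fin n → ℝ) (ε : ℝ) : ℝ≥0∞ :=
  ⨆ y : ℝ, ℙ {ω | |(∑ i, x i * Ξ ω i) - y| ≤ ε}

theorem stmt_5 {Ω : Type*} [MeasureSpace Ω] [IsProbabilityMeasure (ℙ : Measure Ω)]
    {n m : ℕ} (hmn : m ≤ n) (ξ : Ω → ℝ) (Ξ : Ω → Fin n → ℝ)
    (hmeas : ∀ i, Measurable fun ω => Ξ ω i)
    (hindep : iIndepFun
      (fun i ω => Ξ ω i) ℙ)
    (hid : ∀ i : Fin n, IdentDistrib (fun ω => Ξ ω i) ξ ℙ ℙ)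
    (v : Fin n → ℝ) (e : Fin m ↪ Fin n) (r : ℝ) (hr : 0 < r) :
    levyConc Ξ v r ≤ levyConc (fun ω i => Ξ ω (e i)) (fun i => v (e i)) r := by
  classical
  set g : Fin n → Ω → ℝ := fun i ω => v i * Ξ ω i with hg
  have hg_meas : ∀ i, Measurable (g i) := fun i => (hmeas i).const_mul (v i)
  have hg_indep : iIndepFun g ℙ :=
    hindep.comp (fun i x => v i * x) (fun i => measurable_const_mul _)
  set A : Finset (Fin n) := Finset.univ.map e with hA
  set X : Ω → ℝ := fun ω => ∑ j ∈ A, g j ω with hX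
  set Y : Ω → ℝ := fun ω => ∑ j ∈ Aᶜ, g j ω with hY
  have hXmeas : Measurable X := Finset.measurable_sum _ fun i _ => hg_meas i
  have hYmeas : Measurable Y := Finset.measurable_sum _ fun i _ => hg_meas i
  -- independence of Y and X
  have hYX : IndepFun Y X ℙ := by
    have h := hg_indep.indepFun_finset Aᶜ A disjoint_compl_left hg_meas
    have h2 := h.comp (φ := fun x : (↥(Aᶜ) → ℝ) => ∑ i, x i)
      (ψ := fun x : (↥A → ℝ) => ∑ i, x i)
      (Finset.measurable_sum _ fun i _ => measurable_pi_apply i)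
      (Finset.measurable_sum _ fun i _ => measurable_pi_apply i)
    have e1 : ((fun x : (↥(Aᶜ) → ℝ) => ∑ i, x i) ∘ fun a (i : ↥(Aᶜ)) => g i a) = Y := by
      funext a; exact Finset.sum_attach _ fun j => g j a
    have e2 : ((fun x : (↥A → ℝ) => ∑ i, x i) ∘ fun a (i : ↥A) => g i a) = X := by
      funext a; exact Finset.sum_attach _ fun j => g j a
    rwa [e1, e2] at h2
  have hmap : (ℙ : Measure Ω).map (fun ω => (Y ω, X ω))
      = ((ℙ : Measure Ω).map Y).prod ((ℙ : Measure Ω).map X) :=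
    (indepFun_iff_map_prod_eq_prod_map_map hYmeas.aemeasurable hXmeas.aemeasurable).mp hYX
  have hsum : ∀ ω, (∑ i, v i * Ξ ω i) = Y ω + X ω := by
    intro ω
    rw [hY, hX]
    exact (Finset.sum_add_sum_compl A (fun j => g j ω)).symm.trans (by ring)
  -- the restricted sum equals X
  have hXeq : ∀ ω, (∑ i, v (e i) * Ξ ω (e i)) = X ω := by
    intro ω
    simp only [hX, hA, Finset.sum_map, hg]
  rw [levyConc, levyConc]
  refine iSup_le fun y => ?_
  -- compute the probability via the product measure
  have key : ℙ {ω | |(∑ i, v i * Ξ ω i) - y| ≤ r}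
      ≤ ⨆ y' : ℝ, ℙ {ω | |X ω - y'| ≤ r} := by
    have hset : {ω | |(∑ i, v i * Ξ ω i) - y| ≤ r}
        = (fun ω => (Y ω, X ω)) ⁻¹' {p : ℝ × ℝ | |p.1 + p.2 - y| ≤ r} := by
      ext ω; simp [hsum ω]
    have hS : MeasurableSet {p : ℝ × ℝ | |p.1 + p.2 - y| ≤ r} := by
      apply measurableSet_le (by fun_prop) measurable_const
    rw [hset, ← Measure.map_apply (hYmeas.prodMk hXmeas) hS, hmap,
      Measure.prod_apply hS]
    have hbound : ∀ s : ℝ, ((ℙ : Measure Ω).map X) (Prod.mk s ⁻¹' {p : ℝ × ℝ | |p.1 + p.2 - y| ≤ r})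
        ≤ ⨆ y' : ℝ, ℙ {ω | |X ω - y'| ≤ r} := by
      intro s
      have : (Prod.mk s ⁻¹' {p : ℝ × ℝ | |p.1 + p.2 - y| ≤ r})
          = {x : ℝ | |x - (y - s)| ≤ r} := by
        ext x
        simp only [Set.mem_preimage, Set.mem_setOf_eq]
        rw [show s + x - y = x - (y - s) from by ring]
      rw [this, Measure.map_apply hXmeas (by apply measurableSet_le (by fun_prop) measurable_const)]
      exact le_iSup (fun y' => ℙ {ω | |X ω - y'| ≤ r}) (y - s)
    calc ∫⁻ s, ((ℙ : Measure Ω).map X) (Prod.mk s ⁻¹' {p : ℝ × ℝ | |p.1 + p.2 - y| ≤ r})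
          ∂((ℙ : Measure Ω).map Y)
        ≤ ∫⁻ _, (⨆ y' : ℝ, ℙ {ω | |X ω - y'| ≤ r}) ∂((ℙ : Measure Ω).map Y) :=
          lintegral_mono hbound
      _ = ⨆ y' : ℝ, ℙ {ω | |X ω - y'| ≤ r} := by
          have : IsProbabilityMeasure ((ℙ : Measure Ω).map Y) :=
            Measure.isProbabilityMeasure_map hYmeas.aemeasurable
          simp
  refine key.trans (iSup_le fun y' => ?_)
  have : {ω | |X ω - y'| ≤ r} = {ω | |(∑ i, v (e i) * Ξ ω (e i)) - y'| ≤ r} := by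
    ext ω; simp [hXeq ω]
  rw [this]
  exact le_iSup (fun z => ℙ {ω | |(∑ i, v (e i) * Ξ ω (e i)) - z| ≤ r}) y'
end
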